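/- Let R be a ring and P a prime ideal that is locally closed in Spec(R) (the intersection of all prime ideals properly containing P is strictly larger than P). Then P is left primitive if and only if the Jacobson radical of R/P is zero. -/

import Mathlib

universe u

/-- An ideal is two-sided if it is closed under right multiplication. -/
def Ideal.IsTwoSided' {R : Type u} [Ring R] (P : Ideal R) : Prop :=
  ∀ a ∈ P, ∀ r : R, a * r ∈ P

/-- A (two-sided) ideal is prime in the noncommutative sense. -/
def Ideal.IsPrimeNC {R : Type u} [Ring R] (P : Ideal R) : Prop :=
  P ≠ ⊤ ∧ ∀ a b : R, (∀ r : R, a * r * b ∈ P) → a ∈ P ∨ b ∈ P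

/-- An ideal `P` of `R` is left primitive if it is the annihilator of a simple left
`R`-module. -/
def Ideal.IsLeftPrimitive {R : Type u} [Ring R] (P : Ideal R) : Prop :=
  ∃ (M : Type u) (_ : AddCommGroup M) (_ : Module R M),
    IsSimpleModule R M ∧ ∀ r : R, r ∈ P ↔ ∀ m : M, r • m = 0

/-- The annihilator of the left module `R ⧸ m`, as a left ideal of `R`. -/
def annOfMax {R : Type u} [Ring R] (m : Ideal R) : Ideal R where
  carrier := {r | ∀ s : R, r * s ∈ m}
  add_mem' := by
    intro a b ha hb s
    simpa [add_mul] using m.add_mem (ha s) (hb s)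
  zero_mem' := by
    intro s; simpa using m.zero_mem
  smul_mem' := by
    intro c r hr s
    simpa [smul_eq_mul, mul_assoc] using m.smul_mem c (hr s)

theorem mem_annOfMax {R : Type u} [Ring R] {m : Ideal R} {r : R} :
    r ∈ annOfMax m ↔ ∀ s : R, r * s ∈ m := Iff.rfl

theorem annOfMax_le {R : Type u} [Ring R] (m : Ideal R) : annOfMax m ≤ m := by
  intro r hr
  simpa using hr 1

theorem annOfMax_twoSided {R : Type u} [Ring R] (m : Ideal R) :
    (annOfMax m).IsTwoSided' := by
  intro a ha t s
  rw [mul_assoc]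
  exact ha (t * s)

theorem annOfMax_prime {R : Type u} [Ring R] (m : Ideal R) (hm : m.IsMaximal) :
    (annOfMax m).IsPrimeNC := by
  constructor
  · intro htop
    have h1 : (1 : R) ∈ annOfMax m := htop ▸ Submodule.mem_top
    have := h1 1
    simp at this
    exact hm.ne_top (Ideal.eq_top_iff_one m |>.mpr this)
  · intro a b hab
    by_cases hb : b ∈ annOfMax m
    · exact Or.inr hb
    · left
      rw [mem_annOfMax] at hb
      push_neg at hb
      obtain ⟨s0, hs0⟩ := hb
      -- m ⊔ span {b * s0} = ⊤
      have hcoatom : IsCoatom m := Ideal.isMaximal_def.mp hm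
      have hlt : m < m ⊔ Submodule.span R {b * s0} := by
        refine lt_of_le_of_ne le_sup_left ?_
        intro heq
        exact hs0 (heq ▸ (le_sup_right : Submodule.span R {b * s0} ≤ _)
          (Submodule.mem_span_singleton_self _))
      have htop : m ⊔ Submodule.span R {b * s0} = ⊤ := hcoatom.2 _ hlt
      have h1 : (1 : R) ∈ m ⊔ Submodule.span R {b * s0} := htop ▸ Submodule.mem_top
      obtain ⟨x, hx, y, hy, hxy⟩ := Submodule.mem_sup.mp h1
      obtain ⟨t, ht⟩ := Submodule.mem_span_singleton.mp hy
      intro s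
      have hx1 : x = 1 - t * (b * s0) := by
        have h := eq_sub_of_add_eq hxy
        rwa [← ht, smul_eq_mul] at h
      have key : a * s = a * s * x + a * (s * t) * b * s0 := by
        rw [hx1]; noncomm_ring
      rw [key]
      refine m.add_mem ?_ (hab (s * t) s0)
      exact m.smul_mem (a * s) hx

theorem locallyClosed_primitive_iff_jacobson {R : Type u} [Ring R] (P : Ideal R)
    (h2 : P.IsTwoSided') (hp : P.IsPrimeNC)
    (hlc : sInf {Q : Ideal R | Q.IsTwoSided' ∧ Q.IsPrimeNC ∧ P < Q} ≠ P) :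
    P.IsLeftPrimitive ↔ P.jacobson = P := by
  constructor
  · rintro ⟨M, _, _, hsimp, hann⟩
    refine le_antisymm ?_ Ideal.le_jacobson
    intro r hr
    rw [hann]
    intro x
    by_cases hx : x = 0
    · simp [hx]
    · set f := LinearMap.toSpanSingleton R M x with hf
      have hsurj : Function.Surjective f := by
        rw [← LinearMap.range_eq_top]
        rcases hsimp.1.2 (LinearMap.range f) with h | h
        · exfalso
          apply hx
          have : x ∈ LinearMap.range f := ⟨1, by simp [hf]⟩
          rw [h] at this
          simpa using this
        · exact h
      have hmax : Ideal.IsMaximal (LinearMap.ker f : Ideal R) := by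
        rw [Ideal.isMaximal_def, ← isSimpleModule_iff_isCoatom]
        have := hsimp
        exact IsSimpleModule.congr (f.quotKerEquivOfSurjective hsurj)
      have hPle : P ≤ LinearMap.ker f := by
        intro p hpP
        rw [LinearMap.mem_ker]
        exact (hann p).mp hpP x
      have hle : P.jacobson ≤ LinearMap.ker f := sInf_le ⟨hPle, hmax⟩
      have : r ∈ LinearMap.ker f := hle hr
      simpa [hf] using this
  · intro hj
    -- For each maximal m ⊇ P, P ≤ annOfMax m. If always strict, contradiction with hlc.
    have hPle : ∀ m : Ideal R, P ≤ m → P ≤ annOfMax m := by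
      intro m hm r hr s
      exact hm (h2 r hr s)
    by_cases hex : ∃ m : Ideal R, P ≤ m ∧ m.IsMaximal ∧ annOfMax m = P
    · obtain ⟨m, hPm, hmax, heq⟩ := hex
      refine ⟨R ⧸ m, inferInstance, inferInstance, ?_, ?_⟩
      · exact isSimpleModule_iff_isCoatom.mpr (Ideal.isMaximal_def.mp hmax)
      · intro r
        constructor
        · intro hrP y
          obtain ⟨s, rfl⟩ := Submodule.Quotient.mk_surjective m y
          rw [← Submodule.Quotient.mk_smul, Submodule.Quotient.mk_eq_zero]
          have : r ∈ annOfMax m := heq ▸ hrP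
          simpa [smul_eq_mul] using this s
        · intro hr
          rw [← heq]
          intro s
          have := hr (Submodule.Quotient.mk s)
          rw [← Submodule.Quotient.mk_smul, Submodule.Quotient.mk_eq_zero] at this
          simpa [smul_eq_mul] using this
    · exfalso
      push_neg at hex
      apply hlc
      refine le_antisymm ?_ ?_
      · -- sInf {primes > P} ≤ P = jacobson P = sInf of maximals ⊇ P
        refine le_trans ?_ hj.le
        show _ ≤ sInf {J : Ideal R | P ≤ J ∧ J.IsMaximal}
        refine le_sInf ?_
        rintro m ⟨hPm, hmax⟩
        calc sInf {Q : Ideal R | Q.IsTwoSided' ∧ Q.IsPrimeNC ∧ P < Q}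
            ≤ annOfMax m := sInf_le ⟨annOfMax_twoSided m, annOfMax_prime m hmax,
              lt_of_le_of_ne (hPle m hPm) (fun h => hex m hPm hmax h.symm)⟩
          _ ≤ m := annOfMax_le m
      · refine le_sInf ?_
        rintro Q ⟨-, -, hPQ⟩
        exact hPQ.le
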